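/- Theorem 2.2 (upper bound for IWCE): with η(x) = (1/F(x))·∫₀ˣ φ(y)·F(y) dy for x > 0, one has IWCE(t₁,t₂) ≤ E[η(X) | t₁ ≤ X ≤ t₂]. -/

import Mathlib

open MeasureTheory intervalIntegral Set
open scoped ENNReal

private lemma aux_step_ineq {Gu Gv c e M J : ℝ} (hc : 0 < c) (hcu : c ≤ Gu) (hcv : c ≤ Gv)
    (hnn : 0 ≤ Gv - Gu) (hle : Gv - Gu ≤ c ^ 2 * e / M) (hM : 0 < M)
    (hJ : (Gv - Gu) / Gv ≤ J) :
    Real.log Gv - Real.log Gu ≤ J + (Gv - Gu) * (e / M) := by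
  have hGu : 0 < Gu := lt_of_lt_of_le hc hcu
  have hGv : 0 < Gv := lt_of_lt_of_le hc hcv
  have l1 : Real.log Gv - Real.log Gu ≤ (Gv - Gu) / Gu := by
    have h1 := Real.log_le_sub_one_of_pos (div_pos hGv hGu)
    rw [Real.log_div hGv.ne' hGu.ne'] at h1
    have h2 : Gv / Gu - 1 = (Gv - Gu) / Gu := by field_simp
    linarith
  have key : (Gv - Gu) / Gu - (Gv - Gu) / Gv = (Gv - Gu) ^ 2 / (Gu * Gv) := by
    field_simp
  have hc2 : c ^ 2 ≤ Gu * Gv := by nlinarith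
  have b1 : (Gv - Gu) ^ 2 / (Gu * Gv) ≤ (Gv - Gu) ^ 2 / c ^ 2 := by
    gcongr
  have b2 : (Gv - Gu) ^ 2 / c ^ 2 ≤ (Gv - Gu) * (e / M) := by
    have e2 : (Gv - Gu) ^ 2 / c ^ 2 = (Gv - Gu) * ((Gv - Gu) / c ^ 2) := by ring
    rw [e2]
    refine mul_le_mul_of_nonneg_left ?_ hnn
    rw [div_le_div_iff₀ (by positivity) hM]
    have h3 : (Gv - Gu) * M ≤ (c ^ 2 * e / M) * M := mul_le_mul_of_nonneg_right hle hM.le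
    have h4 : (c ^ 2 * e / M) * M = e * c ^ 2 := by field_simp
    linarith
  linarith

lemma aux_log_le_int (f G : ℝ → ℝ) {a b c : ℝ} (hab : a ≤ b) (hc : 0 < c)
    (hGc : ∀ x ∈ Set.Icc a b, c ≤ G x)
    (hGcont : ContinuousOn G (Set.Icc a b))
    (hGint : ∀ u v, a ≤ u → u ≤ v → v ≤ b → G v - G u = ∫ z in Set.Ioc u v, f z)
    (hf0 : ∀ x, 0 ≤ f x)
    (hfab : MeasureTheory.IntegrableOn f (Set.Ioc a b))
    (hq : MeasureTheory.IntegrableOn (fun z => f z / G z) (Set.Ioc a b)) :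
    Real.log (G b) - Real.log (G a) ≤ ∫ z in Set.Ioc a b, f z / G z := by
  have hGpos : ∀ x ∈ Set.Icc a b, 0 < G x := fun x hx => lt_of_lt_of_le hc (hGc x hx)
  have hGmono : ∀ u v, a ≤ u → u ≤ v → v ≤ b → G u ≤ G v := by
    intro u v h1 h2 h3
    have h := hGint u v h1 h2 h3
    have h4 : 0 ≤ ∫ z in Set.Ioc u v, f z :=
      setIntegral_nonneg measurableSet_Ioc (fun z _ => hf0 z)
    linarith
  refine le_of_forall_pos_le_add fun ε hε => ?_
  set M : ℝ := G b - G a + 1 with hM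
  have hba : G a ≤ G b := hGmono a b le_rfl hab le_rfl
  have hM1 : 1 ≤ M := by simp only [hM]; linarith
  have hMpos : 0 < M := lt_of_lt_of_le one_pos hM1
  set εG : ℝ := c ^ 2 * ε / M with hεGdef
  have hεG : 0 < εG := by positivity
  have hUC := (isCompact_Icc.uniformContinuousOn_of_continuous hGcont)
  rw [Metric.uniformContinuousOn_iff] at hUC
  obtain ⟨δ, hδ, hδ'⟩ := hUC εG hεG
  obtain ⟨n₀, hn₀⟩ := exists_nat_gt ((b - a) / δ)
  set n : ℕ := n₀ + 1 with hn
  have hnpos : (0:ℝ) < (n:ℝ) := by positivity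
  set h : ℝ := (b - a) / n with hhdef
  have hh0 : 0 ≤ h := div_nonneg (by linarith) hnpos.le
  have hhδ : h < δ := by
    rw [hhdef, div_lt_iff₀ hnpos]
    have h2 : (b - a) / δ < (n:ℝ) := by
      refine lt_of_lt_of_le hn₀ ?_
      exact_mod_cast Nat.le_succ n₀
    have h3 : ((b - a) / δ) * δ < (n:ℝ) * δ := mul_lt_mul_of_pos_right h2 hδ
    have h4 : ((b - a) / δ) * δ = b - a := by field_simp
    nlinarith
  have hxmem : ∀ k : ℕ, k ≤ n → a + k * h ∈ Set.Icc a b := by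
    intro k hk
    constructor
    · nlinarith [mul_nonneg (Nat.cast_nonneg k : (0:ℝ) ≤ k) hh0]
    · have hkn : (k:ℝ) ≤ (n:ℝ) := by exact_mod_cast hk
      have h5 : (k:ℝ) * h ≤ (n:ℝ) * h := mul_le_mul_of_nonneg_right hkn hh0
      have hnh : (n:ℝ) * h = b - a := by rw [hhdef]; field_simp
      linarith
  have hxn : a + (n:ℝ) * h = b := by rw [hhdef]; field_simp; ring
  have main : ∀ k : ℕ, k ≤ n →
      Real.log (G (a + k * h)) - Real.log (G a)
        ≤ (∫ z in Set.Ioc a (a + k * h), f z / G z) + ε / M * (G (a + k * h) - G a) := by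
    intro k
    induction k with
    | zero => intro _; simp
    | succ k ih =>
      intro hk1
      have hk : k ≤ n := le_trans (Nat.le_succ k) hk1
      have ihk := ih hk
      set u : ℝ := a + k * h with hu
      set v : ℝ := a + (k + 1 : ℕ) * h with hv
      have huv : u ≤ v := by
        rw [hu, hv]; push_cast; nlinarith
      have hmemu : u ∈ Set.Icc a b := hxmem k hk
      have hmemv : v ∈ Set.Icc a b := hxmem (k+1) hk1
      have hau : a ≤ u := hmemu.1
      have hvb : v ≤ b := hmemv.2
      have hvu : v - u = h := by rw [hu, hv]; push_cast; ring
      have hΔnn : 0 ≤ G v - G u := by linarith [hGmono u v hau huv hvb]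
      have hΔle : G v - G u ≤ εG := by
        have hd : dist u v < δ := by
          rw [Real.dist_eq, show u - v = -h by linarith, abs_neg, abs_of_nonneg hh0]
          exact hhδ
        have h6 := hδ' u hmemu v hmemv hd
        rw [Real.dist_eq] at h6
        calc G v - G u ≤ |G u - G v| := by rw [abs_sub_comm]; exact le_abs_self _
          _ ≤ εG := h6.le
      have l2 : (G v - G u) / G v ≤ ∫ z in Set.Ioc u v, f z / G z := by
        have e1 : (G v - G u) / G v = ∫ z in Set.Ioc u v, f z / G v := by
          rw [hGint u v hau huv hvb, MeasureTheory.integral_div]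
        rw [e1]
        refine setIntegral_mono_on
          ((hfab.mono_set (Set.Ioc_subset_Ioc hau hvb)).div_const _)
          (hq.mono_set (Set.Ioc_subset_Ioc hau hvb)) measurableSet_Ioc ?_
        intro z hz
        have hzm : z ∈ Set.Icc a b := ⟨le_trans hau hz.1.le, le_trans hz.2 hvb⟩
        have hGz : 0 < G z := hGpos z hzm
        have hGzv : G z ≤ G v := hGmono z v hzm.1 hz.2 hvb
        gcongr
        exact hf0 z
      have lstep : Real.log (G v) - Real.log (G u)
          ≤ (∫ z in Set.Ioc u v, f z / G z) + (G v - G u) * (ε / M) := by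
        refine aux_step_ineq hc (hGc u hmemu) (hGc v hmemv) hΔnn ?_ hMpos l2
        rw [hεGdef] at hΔle; exact hΔle
      have hsplit : ∫ z in Set.Ioc a v, f z / G z
          = (∫ z in Set.Ioc a u, f z / G z) + ∫ z in Set.Ioc u v, f z / G z := by
        rw [← Set.Ioc_union_Ioc_eq_Ioc hau huv]
        exact setIntegral_union (Set.Ioc_disjoint_Ioc_of_le le_rfl) measurableSet_Ioc
          (hq.mono_set (Set.Ioc_subset_Ioc le_rfl (le_trans huv hvb)))
          (hq.mono_set (Set.Ioc_subset_Ioc hau hvb))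
      have heq : ε / M * (G u - G a) + (G v - G u) * (ε / M) = ε / M * (G v - G a) := by ring
      linarith
  have hfin := main n le_rfl
  rw [hxn] at hfin
  have hlast : ε / M * (G b - G a) ≤ ε := by
    have h1 : G b - G a ≤ M := by simp only [hM]; linarith
    have h2 : ε / M * (G b - G a) ≤ ε / M * M :=
      mul_le_mul_of_nonneg_left h1 (by positivity)
    have h3 : ε / M * M = ε := by field_simp
    linarith
  linarith



theorem iwce_upper_bound
    (f φ F η : ℝ → ℝ)
    (hf_meas : Measurable f) (hf_nonneg : ∀ x, 0 ≤ f x)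
    (hφ_meas : Measurable φ) (hφ_nonneg : ∀ x, 0 ≤ φ x)
    (hF : ∀ x, F x = ∫ s in (0:ℝ)..x, f s)
    (hFpos : ∀ x, 0 < x → 0 < F x)
    (hη : ∀ x, 0 < x → η x = (1 / F x) * ∫ y in (0:ℝ)..x, φ y * F y)
    (t₁ t₂ : ℝ) (ht₁ : 0 ≤ t₁) (ht : t₁ < t₂)
    (hF0 : 0 < F t₁) (hF12 : F t₁ < F t₂) (hF1 : F t₂ < 1)
    (hi1 : IntervalIntegrable
      (fun x => φ x * (F x / (F t₂ - F t₁)) *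
        Real.log (F x / (F t₂ - F t₁))) volume t₁ t₂)
    (hi2 : IntervalIntegrable (fun x => η x * f x) volume t₁ t₂)
    (hi3 : ∀ x, 0 < x → IntervalIntegrable (fun y => φ y * F y) volume 0 x) :
    -∫ x in t₁..t₂, φ x * (F x / (F t₂ - F t₁)) * Real.log (F x / (F t₂ - F t₁))
      ≤ (∫ x in t₁..t₂, η x * f x) / (F t₂ - F t₁) := by
  have ht₂pos : 0 < t₂ := lt_of_le_of_lt ht₁ ht
  have hΔ : 0 < F t₂ - F t₁ := sub_pos.2 hF12
  have ht₁pos : 0 < t₁ := by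
    rcases lt_or_eq_of_le ht₁ with h | h
    · exact h
    · exfalso
      have : F t₁ = 0 := by rw [hF t₁, ← h, intervalIntegral.integral_same]
      linarith
  have hIntf : ∀ b : ℝ, 0 < b → IntegrableOn f (Set.Ioc 0 b) volume := by
    intro b hb
    by_contra hcon
    have h1 : ¬ IntervalIntegrable f volume 0 b := by
      rw [intervalIntegrable_iff_integrableOn_Ioc_of_le hb.le]
      exact hcon
    have h2 := intervalIntegral.integral_undef h1
    have h3 := hFpos b hb
    rw [hF b] at h3
    rw [h2] at h3
    exact lt_irrefl 0 h3
  have hFuv : ∀ u v : ℝ, 0 ≤ u → u ≤ v → F v - F u = ∫ z in Set.Ioc u v, f z := by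
    intro u v hu huv
    rcases eq_or_lt_of_le (le_trans hu huv) with h0v | h0v
    · have huv0 : u = 0 := le_antisymm (by linarith) hu
      have hv0 : v = 0 := h0v.symm
      rw [huv0, hv0]
      simp
    · have hsub : Set.Ioc 0 u ∪ Set.Ioc u v = Set.Ioc 0 v := Set.Ioc_union_Ioc_eq_Ioc hu huv
      have hint1 : IntegrableOn f (Set.Ioc 0 u) volume :=
        (hIntf v h0v).mono_set (Set.Ioc_subset_Ioc le_rfl huv)
      have hint2 : IntegrableOn f (Set.Ioc u v) volume :=
        (hIntf v h0v).mono_set (Set.Ioc_subset_Ioc hu le_rfl)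
      rw [hF u, hF v, intervalIntegral.integral_of_le hu, intervalIntegral.integral_of_le
        (le_trans hu huv), ← hsub,
        setIntegral_union (Set.Ioc_disjoint_Ioc_of_le le_rfl) measurableSet_Ioc hint1 hint2]
      ring
  have hFmono : ∀ u v : ℝ, 0 ≤ u → u ≤ v → F u ≤ F v := by
    intro u v hu huv
    have h := hFuv u v hu huv
    have h2 : 0 ≤ ∫ z in Set.Ioc u v, f z :=
      setIntegral_nonneg measurableSet_Ioc (fun z _ => hf_nonneg z)
    linarith
  have hF0z : F 0 = 0 := by rw [hF 0, intervalIntegral.integral_same]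
  have hFnn : ∀ x, 0 ≤ x → 0 ≤ F x := by
    intro x hx
    have := hFmono 0 x le_rfl hx
    linarith
  -- the measurable monotone version F'
  set F' : ℝ → ℝ := fun x => ∫ z in Set.Ioc 0 (min x t₂), f z with hF'def
  have hF'eq : ∀ x, 0 ≤ x → x ≤ t₂ → F' x = F x := by
    intro x hx1 hx2
    rw [hF x, intervalIntegral.integral_of_le hx1]
    simp only [hF'def, min_eq_left hx2]
  have hF'mono : Monotone F' := by
    intro u v huv
    refine setIntegral_mono_set
      ((hIntf t₂ ht₂pos).mono_set (Set.Ioc_subset_Ioc le_rfl (min_le_right _ _)))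
      (Filter.Eventually.of_forall fun z => hf_nonneg z) ?_
    exact HasSubset.Subset.eventuallyLE (Set.Ioc_subset_Ioc le_rfl (min_le_min_right _ huv))
  have hF'meas : Measurable F' := hF'mono.measurable
  have hF'nn : ∀ x, 0 ≤ F' x :=
    fun x => setIntegral_nonneg measurableSet_Ioc (fun z _ => hf_nonneg z)
  have hF'cont : ContinuousOn F' (Set.Icc 0 t₂) := by
    have hicc : IntegrableOn f (Set.Icc 0 t₂) volume := by
      rw [integrableOn_Icc_iff_integrableOn_Ioc]
      exact hIntf t₂ ht₂pos
    have h := intervalIntegral.continuousOn_primitive (f := f) (a := 0) (b := t₂)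
      (μ := volume) hicc
    refine h.congr ?_
    intro x hx
    simp only [hF'def, min_eq_left hx.2]
  have hF'c : ∀ x ∈ Set.Icc t₁ t₂, F t₁ ≤ F' x := by
    intro x hx
    rw [hF'eq x (le_trans ht₁ hx.1) hx.2]
    exact hFmono t₁ x ht₁ hx.1
  -- q = f / F'
  set q : ℝ → ℝ := fun z => f z / F' z with hqdef
  have hq0 : ∀ z, 0 ≤ q z := fun z => div_nonneg (hf_nonneg z) (hF'nn z)
  have hqmeas : Measurable q := hf_meas.div hF'meas
  have hqint : IntegrableOn q (Set.Ioc t₁ t₂) volume := by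
    refine Integrable.mono
      (((hIntf t₂ ht₂pos).mono_set (Set.Ioc_subset_Ioc ht₁ le_rfl)).div_const (F t₁))
      hqmeas.aestronglyMeasurable ?_
    filter_upwards [ae_restrict_mem measurableSet_Ioc] with z hz
    have hzc : F t₁ ≤ F' z := hF'c z ⟨hz.1.le, hz.2⟩
    rw [Real.norm_eq_abs, Real.norm_eq_abs, abs_of_nonneg (hq0 z),
      abs_of_nonneg (div_nonneg (hf_nonneg z) hF0.le)]
    show f z / F' z ≤ f z / F t₁
    gcongr
    exact hf_nonneg z
  -- Jm x = integral of q over Ioc x t₂ (measurable version)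
  set Jm : ℝ → ℝ := fun x => ∫ z in Set.Ioc (min (max x t₁) t₂) t₂, q z with hJmdef
  have hJm_eq : ∀ x ∈ Set.Ioc t₁ t₂, Jm x = ∫ z in Set.Ioc x t₂, q z := by
    intro x hx
    simp only [hJmdef, max_eq_left hx.1.le, min_eq_left hx.2]
  have hJm_anti : Antitone Jm := by
    intro u v huv
    refine setIntegral_mono_set
      (hqint.mono_set (Set.Ioc_subset_Ioc (le_min (le_max_right u t₁) ht.le) le_rfl))
      (Filter.Eventually.of_forall fun z => hq0 z) ?_
    refine HasSubset.Subset.eventuallyLE (Set.Ioc_subset_Ioc ?_ le_rfl)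
    exact min_le_min_right _ (max_le_max_right _ huv)
  have hJm_meas : Measurable Jm := hJm_anti.measurable
  have hJm_nonneg : ∀ x, 0 ≤ Jm x :=
    fun x => setIntegral_nonneg measurableSet_Ioc (fun z _ => hq0 z)
  -- key inequality
  have hkey : ∀ x ∈ Set.Ioc t₁ t₂, Real.log (F t₂) - Real.log (F x) ≤ Jm x := by
    intro x hx
    rw [hJm_eq x hx]
    have hx0 : 0 ≤ x := le_trans ht₁ hx.1.le
    have h := aux_log_le_int f F' (a := x) (b := t₂) (c := F t₁) hx.2 hF0
      (fun y hy => hF'c y ⟨le_trans hx.1.le hy.1, hy.2⟩)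
      (hF'cont.mono (Set.Icc_subset_Icc hx0 le_rfl))
      (fun u v hu huv hv => by
        rw [hF'eq u (le_trans hx0 hu) (le_trans huv hv), hF'eq v (le_trans (le_trans hx0 hu) huv) hv]
        exact hFuv u v (le_trans hx0 hu) huv)
      hf_nonneg
      ((hIntf t₂ ht₂pos).mono_set (Set.Ioc_subset_Ioc hx0 le_rfl))
      (hqint.mono_set (Set.Ioc_subset_Ioc hx.1.le le_rfl))
    rw [hF'eq t₂ ht₂pos.le le_rfl, hF'eq x hx0 hx.2] at h
    exact h
  -- Bm = φ * F'
  set Bm : ℝ → ℝ := fun x => φ x * F' x with hBmdef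
  have hBm_meas : Measurable Bm := hφ_meas.mul hF'meas
  have hBm_nonneg : ∀ x, 0 ≤ Bm x := fun x => mul_nonneg (hφ_nonneg x) (hF'nn x)
  have hBeqm : ∀ x ∈ Set.Ioc t₁ t₂, Bm x = φ x * F x := by
    intro x hx
    simp only [hBmdef, hF'eq x (le_trans ht₁ hx.1.le) hx.2]
  have hBint : IntegrableOn (fun x => φ x * F x) (Set.Ioc t₁ t₂) volume :=
    (hi3 t₂ ht₂pos).1.mono_set (Set.Ioc_subset_Ioc ht₁ le_rfl)
  have hBmint : IntegrableOn Bm (Set.Ioc t₁ t₂) volume := by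
    refine hBint.congr ?_
    filter_upwards [ae_restrict_mem measurableSet_Ioc] with x hx
    exact (hBeqm x hx).symm
  -- nonnegativity of η on positives
  have hηnn : ∀ z : ℝ, 0 < z → 0 ≤ η z := by
    intro z hz
    rw [hη z hz]
    refine mul_nonneg (one_div_nonneg.2 (hFnn z hz.le)) ?_
    exact intervalIntegral.integral_nonneg hz.le
      (fun y hy => mul_nonneg (hφ_nonneg y) (hFnn y hy.1))
  -- lintegral machinery
  set ρ : Measure ℝ := volume.restrict (Set.Ioc t₁ t₂) with hρdef
  set pE : ℝ → ℝ≥0∞ := fun x => ENNReal.ofReal (Bm x) with hpEdef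
  set qE : ℝ → ℝ≥0∞ := fun z => ENNReal.ofReal (q z) with hqEdef
  have hpE_meas : Measurable pE := ENNReal.measurable_ofReal.comp hBm_meas
  have hqE_meas : Measurable qE := ENNReal.measurable_ofReal.comp hqmeas
  set Ψ : ℝ × ℝ → ℝ≥0∞ :=
    fun w => Set.indicator {w : ℝ × ℝ | w.1 < w.2} (fun w => pE w.1 * qE w.2) w with hΨdef
  have hΨmeas : Measurable Ψ :=
    ((hpE_meas.comp measurable_fst).mul (hqE_meas.comp measurable_snd)).indicator
      (measurableSet_lt measurable_fst measurable_snd)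
  have hΨx : ∀ x z : ℝ, Ψ (x, z) = Set.indicator (Set.Ioi x) (fun z => pE x * qE z) z := by
    intro x z
    by_cases h : x < z
    · simp [hΨdef, Set.indicator, h, Set.mem_Ioi]
    · simp [hΨdef, Set.indicator, h, Set.mem_Ioi]
  have hΨz : ∀ x z : ℝ, Ψ (x, z) = Set.indicator (Set.Iio z) (fun x => pE x * qE z) x := by
    intro x z
    by_cases h : x < z
    · simp [hΨdef, Set.indicator, h, Set.mem_Iio]
    · simp [hΨdef, Set.indicator, h, Set.mem_Iio]
  have hinner1 : ∀ x ∈ Set.Ioc t₁ t₂,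
      (∫⁻ z, Ψ (x, z) ∂ρ) = pE x * ∫⁻ z in Set.Ioc x t₂, qE z := by
    intro x hx
    have e0 : (fun z => Ψ (x, z)) = Set.indicator (Set.Ioi x) (fun z => pE x * qE z) :=
      funext fun z => hΨx x z
    rw [e0, lintegral_indicator measurableSet_Ioi, hρdef,
      Measure.restrict_restrict measurableSet_Ioi,
      show Set.Ioi x ∩ Set.Ioc t₁ t₂ = Set.Ioc x t₂ by
        ext w
        simp only [Set.mem_inter_iff, Set.mem_Ioi, Set.mem_Ioc]
        constructor
        · rintro ⟨h1, _, h3⟩; exact ⟨h1, h3⟩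
        · rintro ⟨h1, h2⟩; exact ⟨h1, lt_trans hx.1 h1, h2⟩]
    exact lintegral_const_mul' _ _ ENNReal.ofReal_ne_top
  have hinner2 : ∀ z ∈ Set.Ioc t₁ t₂,
      (∫⁻ x, Ψ (x, z) ∂ρ) = (∫⁻ x in Set.Ioc t₁ z, pE x) * qE z := by
    intro z hz
    have e0 : (fun x => Ψ (x, z)) = Set.indicator (Set.Iio z) (fun x => pE x * qE z) :=
      funext fun x => hΨz x z
    rw [e0, lintegral_indicator measurableSet_Iio, hρdef,
      Measure.restrict_restrict measurableSet_Iio,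
      show Set.Iio z ∩ Set.Ioc t₁ t₂ = Set.Ioo t₁ z by
        ext w
        simp only [Set.mem_inter_iff, Set.mem_Iio, Set.mem_Ioc, Set.mem_Ioo]
        constructor
        · rintro ⟨h1, h2, _⟩; exact ⟨h2, h1⟩
        · rintro ⟨h1, h2⟩; exact ⟨h2, h1, le_trans h2.le hz.2⟩,
      Measure.restrict_congr_set Ioo_ae_eq_Ioc]
    exact lintegral_mul_const' _ _ ENNReal.ofReal_ne_top
  have hJmE : ∀ x ∈ Set.Ioc t₁ t₂,
      ENNReal.ofReal (Jm x) = ∫⁻ z in Set.Ioc x t₂, qE z := by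
    intro x hx
    rw [hJm_eq x hx]
    exact ofReal_integral_eq_lintegral_ofReal
      (hqint.mono_set (Set.Ioc_subset_Ioc hx.1.le le_rfl))
      (Filter.Eventually.of_forall hq0)
  have hstep_lhs : ∫⁻ x in Set.Ioc t₁ t₂, ENNReal.ofReal (Bm x * Jm x)
      = ∫⁻ x, (∫⁻ z, Ψ (x, z) ∂ρ) ∂ρ := by
    refine lintegral_congr_ae ?_
    filter_upwards [ae_restrict_mem measurableSet_Ioc] with x hx
    rw [ENNReal.ofReal_mul (hBm_nonneg x), hinner1 x hx, hJmE x hx]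
  have hswap : (∫⁻ x, (∫⁻ z, Ψ (x, z) ∂ρ) ∂ρ) = ∫⁻ z, (∫⁻ x, Ψ (x, z) ∂ρ) ∂ρ :=
    lintegral_lintegral_swap hΨmeas.aemeasurable
  have hA : ∀ z ∈ Set.Ioc t₁ t₂,
      (∫⁻ x in Set.Ioc t₁ z, pE x) ≤ ENNReal.ofReal (F z * η z) := by
    intro z hz
    have hz0 : 0 < z := lt_trans ht₁pos hz.1
    have hAint : IntegrableOn Bm (Set.Ioc t₁ z) volume :=
      hBmint.mono_set (Set.Ioc_subset_Ioc le_rfl hz.2)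
    rw [← ofReal_integral_eq_lintegral_ofReal hAint (Filter.Eventually.of_forall hBm_nonneg)]
    apply ENNReal.ofReal_le_ofReal
    have e1 : ∫ x in Set.Ioc t₁ z, Bm x = ∫ x in Set.Ioc t₁ z, φ x * F x := by
      refine setIntegral_congr_fun measurableSet_Ioc ?_
      intro x hx
      exact hBeqm x ⟨hx.1, le_trans hx.2 hz.2⟩
    have e2 : ∫ x in Set.Ioc t₁ z, φ x * F x ≤ ∫ x in Set.Ioc 0 z, φ x * F x := by
      refine setIntegral_mono_set ((hi3 z hz0).1) ?_ ?_
      · filter_upwards [ae_restrict_mem measurableSet_Ioc] with y hy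
        exact mul_nonneg (hφ_nonneg y) (hFnn y hy.1.le)
      · exact HasSubset.Subset.eventuallyLE (Set.Ioc_subset_Ioc ht₁ le_rfl)
    have e3 : ∫ x in Set.Ioc 0 z, φ x * F x = F z * η z := by
      rw [hη z hz0, intervalIntegral.integral_of_le hz0.le, ← mul_assoc, mul_one_div,
        div_self (hFpos z hz0).ne', one_mul]
    linarith
  have hbound : ∫⁻ x in Set.Ioc t₁ t₂, ENNReal.ofReal (Bm x * Jm x)
      ≤ ENNReal.ofReal (∫ x in Set.Ioc t₁ t₂, η x * f x) := by
    rw [hstep_lhs, hswap]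
    have h1 : (∫⁻ z, (∫⁻ x, Ψ (x, z) ∂ρ) ∂ρ)
        ≤ ∫⁻ z in Set.Ioc t₁ t₂, ENNReal.ofReal (η z * f z) := by
      refine lintegral_mono_ae ?_
      filter_upwards [ae_restrict_mem measurableSet_Ioc] with z hz
      rw [hinner2 z hz]
      have hz0 : 0 < z := lt_trans ht₁pos hz.1
      have hFz : 0 < F z := hFpos z hz0
      have hF'z : F' z = F z := hF'eq z hz0.le hz.2
      calc (∫⁻ x in Set.Ioc t₁ z, pE x) * qE z
          ≤ ENNReal.ofReal (F z * η z) * qE z := mul_le_mul_left (hA z hz) _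
        _ = ENNReal.ofReal (η z * f z) := by
            rw [hqEdef, ← ENNReal.ofReal_mul (mul_nonneg hFz.le (hηnn z hz0))]
            congr 1
            have hqz : q z = f z / F z := by simp only [hqdef]; rw [hF'z]
            rw [hqz]
            field_simp
    refine le_trans h1 (le_of_eq ?_)
    refine ofReal_integral_eq_lintegral_ofReal hi2.1 ?_ |>.symm
    filter_upwards [ae_restrict_mem measurableSet_Ioc] with z hz
    exact mul_nonneg (hηnn z (lt_trans ht₁pos hz.1)) (hf_nonneg z)
  -- integrability of Bm * Jm and value bound
  have hW2meas : AEStronglyMeasurable (fun x => Bm x * Jm x)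
      (volume.restrict (Set.Ioc t₁ t₂)) :=
    (hBm_meas.mul hJm_meas).aestronglyMeasurable
  have hW2nn : 0 ≤ᵐ[volume.restrict (Set.Ioc t₁ t₂)] fun x => Bm x * Jm x :=
    Filter.Eventually.of_forall fun x => mul_nonneg (hBm_nonneg x) (hJm_nonneg x)
  have hW2int : IntegrableOn (fun x => Bm x * Jm x) (Set.Ioc t₁ t₂) volume := by
    refine ⟨hW2meas, ?_⟩
    rw [hasFiniteIntegral_iff_ofReal hW2nn]
    exact lt_of_le_of_lt hbound ENNReal.ofReal_lt_top
  have hrhs_nn : 0 ≤ ∫ x in Set.Ioc t₁ t₂, η x * f x :=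
    setIntegral_nonneg measurableSet_Ioc
      (fun z hz => mul_nonneg (hηnn z (lt_trans ht₁pos hz.1)) (hf_nonneg z))
  have hW2val : ∫ x in Set.Ioc t₁ t₂, Bm x * Jm x ≤ ∫ x in Set.Ioc t₁ t₂, η x * f x := by
    rw [integral_eq_lintegral_of_nonneg_ae hW2nn hW2meas]
    calc (∫⁻ x in Set.Ioc t₁ t₂, ENNReal.ofReal (Bm x * Jm x)).toReal
        ≤ (ENNReal.ofReal (∫ x in Set.Ioc t₁ t₂, η x * f x)).toReal :=
          ENNReal.toReal_mono ENNReal.ofReal_ne_top hbound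
      _ = _ := ENNReal.toReal_ofReal hrhs_nn
  -- step 1: pointwise logarithm bound
  have hW1int : IntegrableOn
      (fun x => φ x * F x * (Real.log (F t₂) - Real.log (F x))) (Set.Ioc t₁ t₂) volume := by
    have hlogF : IntegrableOn (fun x => φ x * F x * Real.log (F x)) (Set.Ioc t₁ t₂) volume := by
      have hcomb : IntegrableOn (fun x =>
          (F t₂ - F t₁) * (φ x * (F x / (F t₂ - F t₁)) * Real.log (F x / (F t₂ - F t₁)))
          + Real.log (F t₂ - F t₁) * (φ x * F x)) (Set.Ioc t₁ t₂) volume :=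
        (hi1.1.const_mul _).add (hBint.const_mul _)
      refine hcomb.congr ?_
      filter_upwards [ae_restrict_mem measurableSet_Ioc] with x hx
      have hFx : 0 < F x := hFpos x (lt_trans ht₁pos hx.1)
      rw [Real.log_div hFx.ne' hΔ.ne']
      field_simp
      ring
    refine ((hBint.const_mul (Real.log (F t₂))).sub hlogF).congr ?_
    exact Filter.Eventually.of_forall fun x => by simp only [Pi.sub_apply]; ring
  have hstep1 : -∫ x in t₁..t₂, φ x * (F x / (F t₂ - F t₁)) * Real.log (F x / (F t₂ - F t₁))
      ≤ (F t₂ - F t₁)⁻¹ * ∫ x in Set.Ioc t₁ t₂,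
          φ x * F x * (Real.log (F t₂) - Real.log (F x)) := by
    rw [intervalIntegral.integral_of_le ht.le, ← MeasureTheory.integral_neg,
      ← MeasureTheory.integral_const_mul]
    refine setIntegral_mono_on hi1.1.neg (hW1int.const_mul _) measurableSet_Ioc ?_
    intro x hx
    have hFx : 0 < F x := hFpos x (lt_trans ht₁pos hx.1)
    rw [Real.log_div hFx.ne' hΔ.ne']
    have hlog2 : Real.log (F t₂ - F t₁) ≤ Real.log (F t₂) :=
      Real.log_le_log hΔ (by linarith)
    have hco : 0 ≤ φ x * F x / (F t₂ - F t₁) := div_nonneg (mul_nonneg (hφ_nonneg x) hFx.le) hΔ.le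
    calc -(φ x * (F x / (F t₂ - F t₁)) * (Real.log (F x) - Real.log (F t₂ - F t₁)))
        = (φ x * F x / (F t₂ - F t₁)) * (Real.log (F t₂ - F t₁) - Real.log (F x)) := by ring
      _ ≤ (φ x * F x / (F t₂ - F t₁)) * (Real.log (F t₂) - Real.log (F x)) :=
          mul_le_mul_of_nonneg_left (by linarith) hco
      _ = (F t₂ - F t₁)⁻¹ * (φ x * F x * (Real.log (F t₂) - Real.log (F x))) := by ring
  have hW1leW2 : ∫ x in Set.Ioc t₁ t₂, φ x * F x * (Real.log (F t₂) - Real.log (F x))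
      ≤ ∫ x in Set.Ioc t₁ t₂, Bm x * Jm x := by
    refine setIntegral_mono_on hW1int hW2int measurableSet_Ioc ?_
    intro x hx
    rw [hBeqm x hx]
    exact mul_le_mul_of_nonneg_left (hkey x hx)
      (mul_nonneg (hφ_nonneg x) (hFnn x (le_trans ht₁ hx.1.le)))
  have hfinal : (F t₂ - F t₁)⁻¹ * ∫ x in Set.Ioc t₁ t₂,
        φ x * F x * (Real.log (F t₂) - Real.log (F x))
      ≤ (∫ x in t₁..t₂, η x * f x) / (F t₂ - F t₁) := by
    rw [intervalIntegral.integral_of_le ht.le, div_eq_inv_mul]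
    exact mul_le_mul_of_nonneg_left (le_trans hW1leW2 hW2val) (inv_nonneg.2 hΔ.le)
  exact le_trans hstep1 hfinal
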